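/- Let f : (0,∞) → ℂ be measurable such that t ↦ e^{−λt} f(t) is absolutely integrable on (0,∞) for every λ > 0, and suppose there exist A ∈ ℂ and δ > −1 such that f(t)/t^δ → A as t → 0⁺. Then for every θ ∈ (0, π/2): for each ε > 0 there is R > 0 such that every s ∈ ℂ with |s| ≥ R and |arg(s)| ≤ θ satisfies |s^{δ+1} ∫₀^∞ e^{−st} f(t) dt − A·Γ(δ+1)| ≤ ε. In other words, ∫₀^∞ e^{−st} f(t) dt is asymptotically A·Γ(δ+1)/s^{δ+1} as s → ∞ within the angular region |arg(s)| ≤ θ < π/2. -/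

import Mathlib

open MeasureTheory

open Set Filter

set_option maxHeartbeats 1000000


lemma norm_cexp_mul' (s : ℂ) (t : ℝ) (z : ℂ) :
    ‖Complex.exp (-s * t) * z‖ = Real.exp (-(s.re * t)) * ‖z‖ := by
  rw [norm_mul, Complex.norm_exp]
  congr 2
  simp [Complex.mul_re]

lemma integrableOn_exp_mul_rpow {δ : ℝ} (hδ : -1 < δ) {b : ℝ} (hb : 0 < b) :
    IntegrableOn (fun t : ℝ => Real.exp (-(b * t)) * t ^ δ) (Ioi 0) := by
  have h0 : IntegrableOn (fun x : ℝ => Real.exp (-x) * x ^ δ) (Ioi 0) := by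
    simpa using Real.GammaIntegral_convergent (by linarith : (0:ℝ) < δ + 1)
  have h2 : IntegrableOn (fun x : ℝ => Real.exp (-(b*x)) * (b*x) ^ δ) (Ioi 0) := by
    have := (integrableOn_Ioi_comp_mul_left_iff
      (fun x : ℝ => Real.exp (-x) * x ^ δ) 0 hb).mpr
    simpa [mul_zero] using this (by simpa using h0)
  have h3 := h2.const_mul (b ^ (-δ))
  refine IntegrableOn.congr_fun h3 (fun x hx => ?_) measurableSet_Ioi
  have hx' : (0:ℝ) < x := hx
  rw [Real.mul_rpow hb.le hx'.le, Real.rpow_neg hb.le]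
  field_simp [(Real.rpow_pos_of_pos hb δ).ne']

lemma integrableOn_cexp_rpow {δ : ℝ} (hδ : -1 < δ) {s : ℂ} (hs : 0 < s.re) :
    IntegrableOn (fun t : ℝ => Complex.exp (-s * t) * ((t ^ δ : ℝ) : ℂ)) (Ioi 0) := by
  refine Integrable.mono' (integrableOn_exp_mul_rpow hδ hs) ?_ ?_
  · exact Measurable.aestronglyMeasurable (by fun_prop)
  · filter_upwards [ae_restrict_mem measurableSet_Ioi] with t ht
    rw [norm_cexp_mul']
    have : ‖((t ^ δ : ℝ) : ℂ)‖ = t ^ δ := by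
      rw [Complex.norm_real, Real.norm_eq_abs, abs_of_pos (Real.rpow_pos_of_pos ht δ)]
    rw [this]

lemma integrableOn_cexp_f {f : ℝ → ℂ} (hf : Measurable f)
    (hint : ∀ lam : ℝ, 0 < lam →
      IntegrableOn (fun t : ℝ => (Real.exp (-lam * t) : ℂ) * f t) (Set.Ioi 0))
    {s : ℂ} (hs : 0 < s.re) :
    IntegrableOn (fun t : ℝ => Complex.exp (-s * t) * f t) (Ioi 0) := by
  refine Integrable.mono' ((hint s.re hs).norm) ?_ ?_
  · exact ((Complex.measurable_exp.comp
      ((measurable_const.mul Complex.measurable_ofReal))).mul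
        hf).aestronglyMeasurable
  · refine Eventually.of_forall fun t => ?_
    rw [norm_cexp_mul', norm_mul, Complex.norm_real, Real.norm_eq_abs,
      abs_of_pos (Real.exp_pos _), neg_mul]

lemma laplace_rpow_real {δ : ℝ} (hδ : -1 < δ) {r : ℝ} (hr : 0 < r) :
    ∫ t in Ioi (0:ℝ), Complex.exp (-(r:ℂ) * t) * ((t ^ δ : ℝ) : ℂ)
      = (Real.Gamma (δ + 1) : ℂ) / (r:ℂ) ^ ((δ : ℂ) + 1) := by
  have ha : 0 < ((δ:ℂ)+1).re := by simp; linarith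
  have key := Complex.integral_cpow_mul_exp_neg_mul_Ioi ha hr
  have heq : ∀ t ∈ Ioi (0:ℝ),
      Complex.exp (-(r:ℂ) * t) * ((t ^ δ : ℝ) : ℂ)
        = (t:ℂ) ^ ((δ:ℂ) + 1 - 1) * Complex.exp (-((r:ℂ) * t)) := by
    intro t ht
    rw [add_sub_cancel_right, ← Complex.ofReal_cpow (le_of_lt ht), mul_comm, neg_mul]
  rw [setIntegral_congr_fun measurableSet_Ioi heq, key]
  have h1 : ((1:ℂ) / r) ^ ((δ:ℂ)+1) = 1 / (r:ℂ) ^ ((δ:ℂ)+1) := by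
    rw [one_div, one_div, Complex.inv_cpow]
    rw [Complex.arg_ofReal_of_nonneg hr.le]
    exact Real.pi_ne_zero.symm
  have h2 : Complex.Gamma ((δ:ℂ)+1) = (Real.Gamma (δ+1) : ℂ) := by
    rw [show ((δ:ℂ)+1) = ((δ+1:ℝ):ℂ) by push_cast; ring, Complex.Gamma_ofReal]
  rw [h1, h2]; ring

lemma laplace_rpow_complex {δ : ℝ} (hδ : -1 < δ) {s : ℂ} (hs : 0 < s.re) :
    ∫ t in Ioi (0:ℝ), Complex.exp (-s * t) * ((t ^ δ : ℝ) : ℂ)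
      = (Real.Gamma (δ + 1) : ℂ) / s ^ ((δ : ℂ) + 1) := by
  set U : Set ℂ := {z | 0 < z.re} with hUdef
  have hUo : IsOpen U := isOpen_lt continuous_const Complex.continuous_re
  set F : ℂ → ℂ := fun z => ∫ t in Ioi (0:ℝ), Complex.exp (-z * t) * ((t ^ δ : ℝ) : ℂ) with hF
  set g : ℂ → ℂ := fun z => (Real.Gamma (δ + 1) : ℂ) / z ^ ((δ : ℂ) + 1) with hg
  have hmeasF : ∀ w : ℂ, AEStronglyMeasurable
      (fun t : ℝ => Complex.exp (-w * t) * ((t ^ δ : ℝ) : ℂ))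
      (volume.restrict (Ioi (0:ℝ))) :=
    fun w => Measurable.aestronglyMeasurable (by fun_prop)
  have hFd : DifferentiableOn ℂ F U := by
    intro z hz
    have hzre : 0 < z.re := hz
    have hε : 0 < z.re / 2 := by linarith
    have key := hasDerivAt_integral_of_dominated_loc_of_deriv_le
      (μ := volume.restrict (Ioi (0:ℝ)))
      (F := fun w (t : ℝ) => Complex.exp (-w * t) * ((t ^ δ : ℝ) : ℂ))
      (F' := fun w (t : ℝ) => (Complex.exp (-w * t) * (-(t:ℂ))) * ((t ^ δ : ℝ) : ℂ))
      (x₀ := z) (bound := fun t : ℝ => Real.exp (-(z.re / 2 * t)) * t ^ (δ + 1))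
      (Metric.ball_mem_nhds z hε) (Eventually.of_forall hmeasF) (integrableOn_cexp_rpow hδ hzre)
      (Measurable.aestronglyMeasurable (by fun_prop)) ?_
      (integrableOn_exp_mul_rpow (by linarith) hε) ?_
    · exact key.2.differentiableAt.differentiableWithinAt
    · filter_upwards [ae_restrict_mem measurableSet_Ioi] with t ht w hw
      have htpos : (0:ℝ) < t := ht
      have hwre : z.re / 2 < w.re := by
        have h1 : |(w - z).re| ≤ ‖w - z‖ := Complex.abs_re_le_norm _
        have h2 : ‖w - z‖ < z.re / 2 := by
          rw [← Complex.dist_eq]; exact Metric.mem_ball.mp hw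
        have := abs_lt.mp (lt_of_le_of_lt h1 h2)
        simp only [Complex.sub_re] at this
        linarith [this.1]
      rw [norm_mul, norm_mul]
      have e1 : ‖Complex.exp (-w * t)‖ = Real.exp (-(w.re * t)) := by
        simpa using norm_cexp_mul' w t 1
      have e2 : ‖(-(t:ℂ))‖ = t := by
        rw [norm_neg, Complex.norm_real, Real.norm_eq_abs, abs_of_pos htpos]
      have e3 : ‖((t ^ δ : ℝ) : ℂ)‖ = t ^ δ := by
        rw [Complex.norm_real, Real.norm_eq_abs, abs_of_pos (Real.rpow_pos_of_pos htpos δ)]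
      rw [e1, e2, e3, Real.rpow_add_one htpos.ne' δ]
      have e4 : Real.exp (-(w.re * t)) ≤ Real.exp (-(z.re / 2 * t)) := by
        apply Real.exp_le_exp.mpr
        nlinarith
      calc Real.exp (-(w.re * t)) * t * t ^ δ
          ≤ Real.exp (-(z.re / 2 * t)) * t * t ^ δ := by
            apply mul_le_mul_of_nonneg_right (mul_le_mul_of_nonneg_right e4 htpos.le)
              (Real.rpow_pos_of_pos htpos δ).le
        _ = Real.exp (-(z.re / 2 * t)) * (t ^ δ * t) := by ring
    · filter_upwards [ae_restrict_mem measurableSet_Ioi] with t ht w hw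
      have h1 : HasDerivAt (fun w : ℂ => -w * (t:ℂ)) (-(t:ℂ)) w := by
        simpa using (hasDerivAt_id w).neg.mul_const (t:ℂ)
      exact (h1.cexp).mul_const _
  have hgd : DifferentiableOn ℂ g U := by
    intro z hz
    have hz0 : z ≠ 0 := by
      intro h; rw [h] at hz; simp [hUdef] at hz
    have hslit : z ∈ Complex.slitPlane := Or.inl hz
    have h1 : DifferentiableAt ℂ (fun w : ℂ => w ^ ((δ:ℂ)+1)) z :=
      ((hasDerivAt_id z).cpow_const hslit).differentiableAt
    refine ((differentiableAt_const _).div h1 ?_).differentiableWithinAt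
    simp [Complex.cpow_eq_zero_iff, hz0]
  have heq : EqOn F g U := by
    refine (hFd.analyticOnNhd hUo).eqOn_of_preconnected_of_frequently_eq
      (hgd.analyticOnNhd hUo) ((convex_halfSpace_re_gt 0).isPreconnected)
      (show (1:ℂ) ∈ U by simp [hUdef]) ?_
    have htt : Tendsto (fun n : ℕ => ((1 + ((n:ℝ)+1)⁻¹ : ℝ) : ℂ)) atTop (nhdsWithin 1 {(1:ℂ)}ᶜ) := by
      rw [tendsto_nhdsWithin_iff]
      constructor
      · have hr : Tendsto (fun n : ℕ => (1 + ((n:ℝ)+1)⁻¹ : ℝ)) atTop (nhds 1) := by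
          simpa using tendsto_const_nhds.add ((tendsto_one_div_add_atTop_nhds_zero_nat (𝕜 := ℝ)).congr
            (fun n => by rw [one_div]))
        have := (Complex.continuous_ofReal.tendsto 1).comp hr
        simpa [Function.comp_def] using this
      · refine Eventually.of_forall fun n => ?_
        simp only [Set.mem_compl_iff, Set.mem_singleton_iff]
        intro h
        have : (1 + ((n:ℝ)+1)⁻¹ : ℝ) = 1 := by exact_mod_cast h
        have hpos : (0:ℝ) < ((n:ℝ)+1)⁻¹ := by positivity
        linarith
    refine htt.frequently (Frequently.of_forall fun n => ?_)
    have hrpos : (0:ℝ) < 1 + ((n:ℝ)+1)⁻¹ := by positivity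
    exact laplace_rpow_real hδ hrpos
  exact heq hs

/-- **Watson-type lemma at infinity.** Let f : (0,∞) → ℂ be
measurable with t ↦ e^{−λt} f(t) absolutely integrable on (0,∞) for every λ > 0,
and suppose f(t)/t^δ → A as t → 0⁺ for some A ∈ ℂ and δ > −1. Then for every
θ ∈ (0,π/2): s^{δ+1} ∫₀^∞ e^{−st} f(t) dt → A·Γ(δ+1) as s → ∞ in the sector
|arg s| ≤ θ. -/
theorem laplace_asymptotics_at_infinity
    (f : ℝ → ℂ) (hmeas : Measurable f)
    (hint : ∀ lam : ℝ, 0 < lam →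
      IntegrableOn (fun t : ℝ => (Real.exp (-lam * t) : ℂ) * f t) (Set.Ioi 0))
    (A : ℂ) (δ : ℝ) (hδ : -1 < δ)
    (hasymp : Filter.Tendsto (fun t : ℝ => f t / ((t ^ δ : ℝ) : ℂ))
      (nhdsWithin 0 (Set.Ioi 0)) (nhds A)) :
    ∀ θ : ℝ, 0 < θ → θ < Real.pi / 2 → ∀ ε > (0 : ℝ), ∃ R > (0 : ℝ),
      ∀ s : ℂ, R ≤ ‖s‖ → |Complex.arg s| ≤ θ →
        ‖(s ^ ((δ : ℂ) + 1) *
              (∫ t in Set.Ioi (0 : ℝ), Complex.exp (-s * t) * f t) -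
            A * (Real.Gamma (δ + 1) : ℂ))‖ ≤ ε := by
  intro θ hθ0 hθ2 ε hε
  set c := Real.cos θ with hc
  have hcpos : 0 < c := Real.cos_pos_of_mem_Ioo ⟨by linarith, hθ2⟩
  set G := Real.Gamma (δ + 1) with hGdef
  have hGpos : 0 < G := Real.Gamma_pos_of_pos (by linarith)
  have hppos : (0:ℝ) < δ + 1 := by linarith
  set cp := c ^ (δ + 1) with hcp
  have hcppos : 0 < cp := Real.rpow_pos_of_pos hcpos _
  set ε' := ε * cp / (2 * G) with hε'
  have hε'pos : 0 < ε' := by positivity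
  obtain ⟨η₀, hη₀pos, hη₀⟩ := Metric.tendsto_nhdsWithin_nhds.mp hasymp ε' hε'pos
  set η := η₀ / 2 with hηdef
  have hηpos : 0 < η := by positivity
  have hsmall : ∀ t : ℝ, 0 < t → t ≤ η → ‖f t - A * ((t ^ δ : ℝ) : ℂ)‖ ≤ ε' * t ^ δ := by
    intro t ht htη
    have hd := hη₀ (show t ∈ Set.Ioi (0:ℝ) from ht)
      (by rw [Real.dist_eq, sub_zero, abs_of_pos ht]; rw [hηdef] at htη; linarith)
    have htδ : (0:ℝ) < t ^ δ := Real.rpow_pos_of_pos ht δ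
    have hne : ((t ^ δ : ℝ) : ℂ) ≠ 0 := by exact_mod_cast htδ.ne'
    have hrw : f t - A * ((t ^ δ : ℝ) : ℂ)
        = (f t / ((t ^ δ : ℝ) : ℂ) - A) * ((t ^ δ : ℝ) : ℂ) := by
      field_simp
    rw [hrw, norm_mul, Complex.norm_real, Real.norm_eq_abs, abs_of_pos htδ]
    refine mul_le_mul_of_nonneg_right ?_ htδ.le
    rw [← dist_eq_norm]
    exact hd.le
  have hfn : IntegrableOn (fun t : ℝ => Real.exp (-t) * ‖f t‖) (Set.Ioi 0) := by
    have h := (hint 1 one_pos).norm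
    have heq : (fun t : ℝ => ‖(Real.exp (-1 * t) : ℂ) * f t‖)
        = fun t : ℝ => Real.exp (-t) * ‖f t‖ := by
      funext t
      rw [norm_mul, Complex.norm_real, Real.norm_eq_abs, abs_of_pos (Real.exp_pos _),
        neg_one_mul]
    rwa [heq] at h
  have hpn : IntegrableOn (fun t : ℝ => Real.exp (-t) * t ^ δ) (Set.Ioi 0) := by
    simpa [one_mul] using integrableOn_exp_mul_rpow hδ (one_pos : (0:ℝ) < 1)
  set M1 := ∫ t in Set.Ioi η, Real.exp (-t) * ‖f t‖ with hM1
  set M2 := ∫ t in Set.Ioi η, Real.exp (-t) * t ^ δ with hM2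
  have hM1nn : 0 ≤ M1 := setIntegral_nonneg measurableSet_Ioi fun t _ => by positivity
  have hM2nn : 0 ≤ M2 := setIntegral_nonneg measurableSet_Ioi fun t ht => by
    have : (0:ℝ) < t := lt_trans hηpos ht
    positivity
  set M := M1 + ‖A‖ * M2 with hM
  have hMnn : 0 ≤ M := by positivity
  set ε2 := ε / (2 * Real.exp η * (M + 1)) with hε2
  have hε2pos : 0 < ε2 := by positivity
  have htends := tendsto_rpow_mul_exp_neg_mul_atTop_nhds_zero (δ+1) (c*η) (by positivity)
  obtain ⟨R₀, hR₀⟩ := Filter.eventually_atTop.mp (htends.eventually_lt_const hε2pos)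
  set R := max R₀ (max (1/c) 1) with hR
  have hRpos : 0 < R := lt_of_lt_of_le one_pos (le_trans (le_max_right _ _) (le_max_right _ _))
  refine ⟨R, hRpos, ?_⟩
  intro s hsR hsarg
  have hsabs : 0 < ‖s‖ := lt_of_lt_of_le hRpos hsR
  have hs0 : s ≠ 0 := norm_ne_zero_iff.mp hsabs.ne'
  have hcosarg : c ≤ Real.cos s.arg := by
    rw [← Real.cos_abs]
    exact Real.cos_le_cos_of_nonneg_of_le_pi (abs_nonneg _) (by linarith [Real.pi_pos]) hsarg
  have hsre : c * ‖s‖ ≤ s.re := by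
    have h1 := Complex.cos_arg hs0
    have h2 : Real.cos s.arg * ‖s‖ = s.re := by
      rw [h1]; field_simp
    nlinarith
  have hsre1 : 1 ≤ s.re := by
    have h1c : 1 / c ≤ ‖s‖ :=
      le_trans (le_trans (le_max_left _ _) (le_max_right R₀ _)) hsR
    have h2 : c * (1/c) ≤ c * ‖s‖ := mul_le_mul_of_nonneg_left h1c hcpos.le
    rw [mul_one_div, div_self hcpos.ne'] at h2
    linarith
  have hsrepos : 0 < s.re := by linarith
  have habsp : ‖s ^ ((δ:ℂ)+1)‖ = ‖s‖ ^ (δ+1) := by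
    rw [Complex.norm_cpow_of_ne_zero hs0]
    simp
  -- integrabilities
  have hIf : IntegrableOn (fun t : ℝ => Complex.exp (-s*t) * f t) (Set.Ioi 0) :=
    integrableOn_cexp_f hmeas hint hsrepos
  have hIp : IntegrableOn (fun t : ℝ => Complex.exp (-s*t) * ((t^δ : ℝ) : ℂ)) (Set.Ioi 0) :=
    integrableOn_cexp_rpow hδ hsrepos
  set dif : ℝ → ℂ := fun t => Complex.exp (-s*t) * (f t - A * ((t^δ : ℝ) : ℂ)) with hdif
  have hdifeq : dif = fun t : ℝ => Complex.exp (-s*t) * f t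
      - A * (Complex.exp (-s*t) * ((t^δ : ℝ) : ℂ)) := by
    funext t; simp only [hdif]; ring
  have hdifint : IntegrableOn dif (Set.Ioi 0) := by
    rw [hdifeq]; exact hIf.sub (hIp.const_mul A)
  have hsplit : ∀ g : ℝ → ℂ, IntegrableOn g (Set.Ioi 0) →
      ∫ t in Set.Ioi (0:ℝ), g t = (∫ t in Set.Ioc 0 η, g t) + ∫ t in Set.Ioi η, g t := by
    intro g hg
    rw [← Set.Ioc_union_Ioi_eq_Ioi hηpos.le]
    exact setIntegral_union (Set.Ioc_disjoint_Ioi le_rfl) measurableSet_Ioi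
      (hg.mono_set Set.Ioc_subset_Ioi_self) (hg.mono_set (Set.Ioi_subset_Ioi hηpos.le))
  set If := ∫ t in Set.Ioi (0:ℝ), Complex.exp (-s*t) * f t with hIfdef
  set Ip := ∫ t in Set.Ioi (0:ℝ), Complex.exp (-s*t) * ((t^δ : ℝ) : ℂ) with hIpdef
  set Tf := ∫ t in Set.Ioi η, Complex.exp (-s*t) * f t with hTfdef
  set Tp := ∫ t in Set.Ioi η, Complex.exp (-s*t) * ((t^δ : ℝ) : ℂ) with hTpdef
  set Fr := ∫ t in Set.Ioc (0:ℝ) η, dif t with hFrdef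
  have hIpval : Ip = (G : ℂ) / s ^ ((δ:ℂ)+1) := laplace_rpow_complex hδ hsrepos
  have hscne : s ^ ((δ:ℂ)+1) ≠ 0 := by
    simp [Complex.cpow_eq_zero_iff, hs0]
  have h1 : ∫ t in Set.Ioi (0:ℝ), dif t = If - A * Ip := by
    rw [hdifeq, integral_sub hIf (hIp.const_mul A), MeasureTheory.integral_const_mul]
  have h3 : ∫ t in Set.Ioi η, dif t = Tf - A * Tp := by
    rw [hdifeq, integral_sub (hIf.mono_set (Set.Ioi_subset_Ioi hηpos.le))
      ((hIp.mono_set (Set.Ioi_subset_Ioi hηpos.le)).const_mul A), MeasureTheory.integral_const_mul]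
  have hkey : s ^ ((δ:ℂ)+1) * If - A * (G : ℂ)
      = s ^ ((δ:ℂ)+1) * (Fr + (Tf - A * Tp)) := by
    have hAG : A * (G : ℂ) = s ^ ((δ:ℂ)+1) * (A * Ip) := by
      rw [hIpval]
      field_simp
    rw [hAG, ← mul_sub]
    congr 1
    rw [show If - A * Ip = ∫ t in Set.Ioi (0:ℝ), dif t from h1.symm,
      hsplit dif hdifint, h3]
  -- front bound
  have hIpreal : ∫ t in Set.Ioi (0:ℝ), Real.exp (-(s.re * t)) * t ^ δ
      = (1 / s.re) ^ (δ+1) * G := by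
    have h := Real.integral_rpow_mul_exp_neg_mul_Ioi hppos hsrepos
    simp only [add_sub_cancel_right] at h
    rw [← h]
    apply setIntegral_congr_fun measurableSet_Ioi
    intro t _; ring
  have hFrbound : ‖Fr‖ ≤ ε' * ((1 / s.re) ^ (δ+1) * G) := by
    calc ‖Fr‖ ≤ ∫ t in Set.Ioc (0:ℝ) η, ‖dif t‖ := norm_integral_le_integral_norm _
      _ ≤ ∫ t in Set.Ioc (0:ℝ) η, Real.exp (-(s.re * t)) * (ε' * t ^ δ) := by
          apply setIntegral_mono_on
          · exact (hdifint.mono_set Set.Ioc_subset_Ioi_self).norm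
          · exact IntegrableOn.congr_fun (((integrableOn_exp_mul_rpow hδ hsrepos).mono_set
              Set.Ioc_subset_Ioi_self).const_mul ε') (fun t _ => by ring) measurableSet_Ioc
          · exact measurableSet_Ioc
          · intro t ht
            simp only [hdif]
            rw [norm_cexp_mul']
            have h2 := hsmall t ht.1 ht.2
            have h3 : (0:ℝ) ≤ Real.exp (-(s.re * t)) := (Real.exp_pos _).le
            exact mul_le_mul_of_nonneg_left h2 h3
      _ ≤ ∫ t in Set.Ioi (0:ℝ), Real.exp (-(s.re * t)) * (ε' * t ^ δ) := by
          apply setIntegral_mono_set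
          · exact IntegrableOn.congr_fun
              (((integrableOn_exp_mul_rpow hδ hsrepos)).const_mul ε')
              (fun t _ => by ring) measurableSet_Ioi
          · filter_upwards [ae_restrict_mem measurableSet_Ioi] with t ht
            have : (0:ℝ) < t := ht
            positivity
          · exact Filter.Eventually.of_forall Set.Ioc_subset_Ioi_self
      _ = ε' * ((1 / s.re) ^ (δ+1) * G) := by
          rw [show (fun t : ℝ => Real.exp (-(s.re * t)) * (ε' * t ^ δ))
            = fun t : ℝ => ε' * (Real.exp (-(s.re * t)) * t ^ δ) from funext fun t => by ring,
            MeasureTheory.integral_const_mul, hIpreal]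
  have hfront : ‖s‖ ^ (δ+1) * ‖Fr‖ ≤ ε / 2 := by
    have h1 : (1 / s.re) ≤ 1 / (c * ‖s‖) :=
      one_div_le_one_div_of_le (by positivity) hsre
    have h2 : (1 / s.re) ^ (δ+1) ≤ (1 / (c * ‖s‖)) ^ (δ+1) :=
      Real.rpow_le_rpow (by positivity) h1 hppos.le
    have h3 : ‖s‖ ^ (δ+1) * (1 / (c * ‖s‖)) ^ (δ+1) = (1/c) ^ (δ+1) := by
      rw [← Real.mul_rpow hsabs.le (by positivity)]
      congr 1
      field_simp
    calc ‖s‖ ^ (δ+1) * ‖Fr‖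
        ≤ ‖s‖ ^ (δ+1) * (ε' * ((1 / s.re) ^ (δ+1) * G)) :=
          mul_le_mul_of_nonneg_left hFrbound (Real.rpow_nonneg hsabs.le _)
      _ ≤ ‖s‖ ^ (δ+1) * (ε' * ((1 / (c * ‖s‖)) ^ (δ+1) * G)) := by
          apply mul_le_mul_of_nonneg_left _ (Real.rpow_nonneg hsabs.le _)
          apply mul_le_mul_of_nonneg_left _ hε'pos.le
          exact mul_le_mul_of_nonneg_right h2 hGpos.le
      _ = ε' * G * (‖s‖ ^ (δ+1) * (1 / (c * ‖s‖)) ^ (δ+1)) := by ring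
      _ = ε' * G * (1/c) ^ (δ+1) := by rw [h3]
      _ = ε / 2 := by
          rw [one_div, Real.inv_rpow hcpos.le, hε', ← hcp]
          field_simp
  -- tail bounds
  have hexp_bound : ∀ t : ℝ, η ≤ t →
      Real.exp (-(s.re * t)) ≤ Real.exp ((1 - s.re) * η) * Real.exp (-t) := by
    intro t htη
    rw [← Real.exp_add, Real.exp_le_exp]
    nlinarith [mul_nonneg (sub_nonneg.mpr hsre1) (sub_nonneg.mpr htη)]
  have hTfbound : ‖Tf‖ ≤ Real.exp ((1 - s.re) * η) * M1 := by
    calc ‖Tf‖ ≤ ∫ t in Set.Ioi η, ‖Complex.exp (-s*t) * f t‖ := norm_integral_le_integral_norm _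
      _ ≤ ∫ t in Set.Ioi η, Real.exp ((1 - s.re) * η) * (Real.exp (-t) * ‖f t‖) := by
          apply setIntegral_mono_on
          · exact (hIf.mono_set (Set.Ioi_subset_Ioi hηpos.le)).norm
          · exact (hfn.mono_set (Set.Ioi_subset_Ioi hηpos.le)).const_mul _
          · exact measurableSet_Ioi
          · intro t ht
            rw [norm_cexp_mul']
            have h1 := hexp_bound t (le_of_lt ht)
            have h2 : (0:ℝ) ≤ ‖f t‖ := norm_nonneg _
            nlinarith
      _ = Real.exp ((1 - s.re) * η) * M1 := by rw [MeasureTheory.integral_const_mul]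
  have hTpbound : ‖Tp‖ ≤ Real.exp ((1 - s.re) * η) * M2 := by
    calc ‖Tp‖ ≤ ∫ t in Set.Ioi η, ‖Complex.exp (-s*t) * ((t^δ:ℝ):ℂ)‖ :=
          norm_integral_le_integral_norm _
      _ ≤ ∫ t in Set.Ioi η, Real.exp ((1 - s.re) * η) * (Real.exp (-t) * t ^ δ) := by
          apply setIntegral_mono_on
          · exact (hIp.mono_set (Set.Ioi_subset_Ioi hηpos.le)).norm
          · exact (hpn.mono_set (Set.Ioi_subset_Ioi hηpos.le)).const_mul _
          · exact measurableSet_Ioi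
          · intro t ht
            have htpos : (0:ℝ) < t := lt_trans hηpos ht
            rw [norm_cexp_mul', Complex.norm_real, Real.norm_eq_abs,
              abs_of_pos (Real.rpow_pos_of_pos htpos δ)]
            have h1 := hexp_bound t (le_of_lt ht)
            have h2 : (0:ℝ) ≤ t ^ δ := (Real.rpow_pos_of_pos htpos δ).le
            nlinarith
      _ = Real.exp ((1 - s.re) * η) * M2 := by rw [MeasureTheory.integral_const_mul]
  have htail : ‖s‖ ^ (δ+1) * (‖Tf‖ + ‖A‖ * ‖Tp‖) ≤ ε / 2 := by
    have hstep1 : ‖Tf‖ + ‖A‖ * ‖Tp‖ ≤ Real.exp ((1 - s.re) * η) * M := by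
      rw [hM]
      have := mul_le_mul_of_nonneg_left hTpbound (norm_nonneg A)
      calc ‖Tf‖ + ‖A‖ * ‖Tp‖
          ≤ Real.exp ((1 - s.re) * η) * M1
            + ‖A‖ * (Real.exp ((1 - s.re) * η) * M2) := add_le_add hTfbound this
        _ = Real.exp ((1 - s.re) * η) * (M1 + ‖A‖ * M2) := by ring
    have hstep2 : Real.exp ((1 - s.re) * η)
        ≤ Real.exp η * Real.exp (-(c*η) * ‖s‖) := by
      rw [← Real.exp_add, Real.exp_le_exp]
      nlinarith
    have hRs : R₀ ≤ ‖s‖ := le_trans (le_max_left _ _) hsR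
    have hsmallexp : ‖s‖ ^ (δ+1) * Real.exp (-(c*η) * ‖s‖) < ε2 :=
      hR₀ _ hRs
    have hnn1 : (0:ℝ) ≤ ‖s‖ ^ (δ+1) := Real.rpow_nonneg hsabs.le _
    calc ‖s‖ ^ (δ+1) * (‖Tf‖ + ‖A‖ * ‖Tp‖)
        ≤ ‖s‖ ^ (δ+1) * (Real.exp ((1 - s.re) * η) * M) :=
          mul_le_mul_of_nonneg_left hstep1 hnn1
      _ ≤ ‖s‖ ^ (δ+1) * ((Real.exp η * Real.exp (-(c*η) * ‖s‖)) * M) := by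
          apply mul_le_mul_of_nonneg_left _ hnn1
          exact mul_le_mul_of_nonneg_right hstep2 hMnn
      _ = Real.exp η * (‖s‖ ^ (δ+1) * Real.exp (-(c*η) * ‖s‖)) * M := by
          ring
      _ ≤ Real.exp η * ε2 * M := by
          apply mul_le_mul_of_nonneg_right _ hMnn
          exact mul_le_mul_of_nonneg_left hsmallexp.le (Real.exp_pos _).le
      _ ≤ Real.exp η * ε2 * (M + 1) := by
          have hMle : M ≤ M + 1 := by linarith
          exact mul_le_mul_of_nonneg_left hMle (mul_nonneg (Real.exp_pos η).le hε2pos.le)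
      _ = ε / 2 := by
          rw [hε2]
          field_simp
  -- final assembly
  rw [hkey, norm_mul, habsp]
  calc ‖s‖ ^ (δ+1) * ‖Fr + (Tf - A * Tp)‖
      ≤ ‖s‖ ^ (δ+1) * (‖Fr‖ + (‖Tf‖ + ‖A‖ * ‖Tp‖)) := by
        apply mul_le_mul_of_nonneg_left _ (Real.rpow_nonneg hsabs.le _)
        calc ‖Fr + (Tf - A * Tp)‖ ≤ ‖Fr‖ + ‖Tf - A * Tp‖ := norm_add_le _ _
          _ ≤ ‖Fr‖ + (‖Tf‖ + ‖A * Tp‖) := by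
              have := norm_sub_le Tf (A * Tp)
              linarith
          _ = ‖Fr‖ + (‖Tf‖ + ‖A‖ * ‖Tp‖) := by
              rw [norm_mul]
    _ = ‖s‖ ^ (δ+1) * ‖Fr‖
        + ‖s‖ ^ (δ+1) * (‖Tf‖ + ‖A‖ * ‖Tp‖) := by ring
    _ ≤ ε / 2 + ε / 2 := add_le_add hfront htail
    _ = ε := by ring
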